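/- For every real x with 0 < x < π/2, the series ∑_{n=0}^∞ (−1)ⁿ sin((2n+1)x)/(2n+1) converges and its sum equals (i/2)·(arctan(e^{−ix}) − arctan(e^{ix})), where arctan denotes the principal branch of the complex arctangent; in particular this value is real. -/

import Mathlib

open Filter Real Topology Finset

set_option maxRecDepth 8000

/-- For every real `0 < x < π/2`, the series `∑_{n=0}^∞ (-1)ⁿ sin((2n+1)x)/(2n+1)` converges
and its sum equals `(i/2)(arctan(e^{-ix}) - arctan(e^{ix}))`, where `arctan` is the principal
branch of the complex arctangent; in particular this value is real. -/
theorem alt_sin_series_arctan (x : ℝ) (hx0 : 0 < x) (hx2 : x < Real.pi / 2) :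
    ∃ S : ℝ,
      Tendsto (fun N : ℕ => ∑ n ∈ Finset.range N,
          (-1 : ℝ) ^ n * Real.sin ((2 * n + 1) * x) / (2 * n + 1))
        atTop (nhds S) ∧
      (S : ℂ) = Complex.I / 2 *
        (Complex.arctan (Complex.exp (-Complex.I * x)) -
          Complex.arctan (Complex.exp (Complex.I * x))) := by
  have hxpi : x < Real.pi := lt_trans hx2 (by linarith [Real.pi_pos])
  set w : ℂ := Complex.exp (Complex.I * x) with hw
  have hwre : w.re = Real.cos x := by rw [hw, mul_comm, Complex.exp_ofReal_mul_I_re]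
  have hwim : w.im = Real.sin x := by rw [hw, mul_comm, Complex.exp_ofReal_mul_I_im]
  have hcos : 0 < Real.cos x := Real.cos_pos_of_mem_Ioo ⟨by linarith [Real.pi_pos], hx2⟩
  have hsin : 0 < Real.sin x := Real.sin_pos_of_pos_of_lt_pi hx0 hxpi
  have hnw : ‖w‖ = 1 := by
    rw [hw]; rw [Complex.norm_exp]; simp
  -- the coefficient and oscillating part
  set c : ℕ → ℝ := fun n => 1 / (2 * n + 1) with hc
  set z : ℕ → ℂ := fun n => (-1) ^ n * w ^ (2 * n + 1) with hz
  set q : ℂ := -Complex.exp (Complex.I * (2 * x)) with hq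
  have hq1 : q ≠ 1 := by
    intro h
    have : (Complex.exp (Complex.I * (2 * x))).im = Real.sin (2 * x) := by
      rw [show Complex.I * (2 * (x:ℂ)) = ((2*x : ℝ) : ℂ) * Complex.I by push_cast; ring,
        Complex.exp_ofReal_mul_I_im]
    have h2 : Real.sin (2 * x) > 0 :=
      Real.sin_pos_of_pos_of_lt_pi (by linarith) (by linarith)
    have := congrArg Complex.im h
    rw [hq] at this
    simp only [Complex.neg_im, Complex.one_im] at this
    rw [‹(Complex.exp (Complex.I * (2 * x))).im = Real.sin (2*x)›] at this
    linarith
  have hq2 : q = -w ^ 2 := by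
    rw [hq, hw, ← Complex.exp_nat_mul]
    norm_num; ring_nf
  have hzgeom : ∀ n : ℕ, z n = w * q ^ n := by
    intro n
    simp only [hz, hq2]
    rw [show (-w^2 : ℂ) ^ n = (-1)^n * w^(2*n) by rw [← neg_one_mul (w^2), mul_pow, ← pow_mul]]
    ring
  have hbound : ∀ N : ℕ, ‖∑ i ∈ Finset.range N, z i‖ ≤ 2 / ‖1 - q‖ := by
    intro N
    have h1q : (1 : ℂ) - q ≠ 0 := sub_ne_zero.mpr (Ne.symm hq1)
    simp only [hzgeom, ← Finset.mul_sum]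
    rw [geom_sum_eq hq1]
    rw [norm_mul, hnw, one_mul, norm_div]
    have hqn : ‖q ^ N‖ = 1 := by
      rw [norm_pow, hq, norm_neg, Complex.norm_exp]
      simp
    rw [norm_sub_rev q 1]
    gcongr
    calc ‖q ^ N - 1‖ ≤ ‖q ^ N‖ + ‖(1:ℂ)‖ := norm_sub_le _ _
      _ = 2 := by rw [hqn, norm_one]; norm_num
  -- Dirichlet's test
  have hcauchy : CauchySeq (fun N => ∑ i ∈ Finset.range N, c i • z i) := by
    apply Antitone.cauchySeq_series_mul_of_tendsto_zero_of_bounded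
    · intro a b hab
      have hab' : (a : ℝ) ≤ b := Nat.cast_le.mpr hab
      apply one_div_le_one_div_of_le (by positivity)
      linarith
    · have h1 : Tendsto (fun n : ℕ => 2 * (n:ℝ) + 1) atTop atTop := by
        apply Filter.tendsto_atTop_add_const_right
        exact (tendsto_natCast_atTop_atTop (R := ℝ)).const_mul_atTop two_pos
      simpa [hc, one_div, Pi.inv_def] using h1.inv_tendsto_atTop
    · exact hbound
  obtain ⟨L, hL⟩ := cauchySeq_tendsto_of_complete hcauchy
  -- imaginary parts give the real series
  have him : ∀ n : ℕ, (c n • z n).im = (-1:ℝ)^n * Real.sin ((2*n+1)*x) / (2*n+1) := by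
    intro n
    have hzn : z n = (((-1:ℝ)^n : ℝ) : ℂ) *
        Complex.exp (((2*(n:ℝ)+1)*x : ℝ) * Complex.I) := by
      simp only [hz, hw, ← Complex.exp_nat_mul]
      push_cast
      ring_nf
    rw [Complex.smul_im, hzn]
    simp only [Complex.mul_im, Complex.ofReal_re, Complex.ofReal_im,
      Complex.exp_ofReal_mul_I_im, Complex.exp_ofReal_mul_I_re, zero_mul, add_zero,
      mul_zero, hc, smul_eq_mul]
    ring
  have hsum_im : ∀ N : ℕ, ∑ n ∈ Finset.range N, (-1:ℝ)^n * Real.sin ((2*n+1)*x) / (2*n+1)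
      = (∑ i ∈ Finset.range N, c i • z i).im := by
    intro N
    rw [Complex.im_sum]
    exact Finset.sum_congr rfl fun n _ => (him n).symm
  -- Abel's theorem setup
  set f : ℕ → ℂ := fun m => if m % 2 = 1 then c (m/2) • z (m/2) else 0 with hf
  have hsum_eq : ∀ N : ℕ, ∑ m ∈ Finset.range N, f m
      = ∑ n ∈ Finset.range (N/2), c n • z n := by
    intro N
    induction N with
    | zero => simp
    | succ N ih =>
      rw [Finset.sum_range_succ, ih]
      rcases Nat.even_or_odd N with ⟨k, hk⟩ | ⟨k, hk⟩
      · have h1 : N % 2 = 0 := by omega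
        have h2 : (N+1)/2 = N/2 := by omega
        simp [hf, h1, h2]
      · have h1 : N % 2 = 1 := by omega
        have h2 : (N+1)/2 = N/2 + 1 := by omega
        rw [h2, Finset.sum_range_succ]
        simp [hf, h1]
  have hdiv : Tendsto (fun N : ℕ => N / 2) atTop atTop :=
    Filter.tendsto_atTop_atTop.mpr fun b => ⟨2*b, fun a ha => by omega⟩
  have htends_f : Tendsto (fun N => ∑ m ∈ Finset.range N, f m) atTop (𝓝 L) := by
    simp only [hsum_eq]
    exact hL.comp hdiv
  have hAbel := Complex.tendsto_tsum_powerSeries_nhdsWithin_lt htends_f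
  rw [Filter.tendsto_map'_iff] at hAbel
  -- identify the power series with arctan on (0,1)
  have htsum : ∀ r : ℝ, r ∈ Set.Ioo (0:ℝ) 1 →
      ∑' m, f m * (r:ℂ)^m = Complex.arctan ((r:ℂ) * w) := by
    intro r hr
    have hnorm : ‖(r:ℂ) * w‖ < 1 := by
      rw [norm_mul, hnw, mul_one, Complex.norm_real, Real.norm_eq_abs, abs_of_pos hr.1]
      exact hr.2
    have h1 := Complex.hasSum_arctan hnorm
    have hinj : Function.Injective (fun n : ℕ => 2*n+1) := fun a b h => by
      simp only at h; omega
    have h0 : ∀ m ∉ Set.range (fun n : ℕ => 2*n+1), f m * (r:ℂ)^m = 0 := by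
      intro m hm
      have hm2 : m % 2 = 0 := by
        rcases Nat.even_or_odd m with ⟨k,hk⟩|⟨k,hk⟩
        · omega
        · exact absurd ⟨k, by simpa using hk.symm⟩ hm
      simp [hf, hm2]
    have h2 : HasSum (fun m => f m * (r:ℂ)^m) (Complex.arctan ((r:ℂ)*w)) := by
      rw [← Function.Injective.hasSum_iff hinj h0]
      convert h1 using 1
      funext n
      simp only [Function.comp, hf]
      have hmod : (2*n+1) % 2 = 1 := by omega
      have hdiv2 : (2*n+1)/2 = n := by omega
      rw [if_pos hmod, hdiv2, Complex.real_smul]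
      simp only [hz, hc]
      have hne : ((2*(n:ℕ)+1:ℕ):ℂ) ≠ 0 := Nat.cast_ne_zero.mpr (by omega)
      push_cast
      rw [mul_pow]
      ring
    exact h2.tsum_eq
  -- continuity of arctan at w
  have hdne : (1 : ℂ) - w * Complex.I ≠ 0 := by
    intro h
    have h2 := congrArg Complex.im h
    simp only [Complex.sub_im, Complex.one_im, Complex.mul_im, Complex.I_re, Complex.I_im,
      hwre, hwim, Complex.zero_im] at h2
    simp at h2
    linarith
  have hnsq : 0 < Complex.normSq (1 - w * Complex.I) := Complex.normSq_pos.mpr hdne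
  have huim : 0 < ((1 + w * Complex.I)/(1 - w * Complex.I)).im := by
    rw [Complex.div_im]
    have e1 : (1 + w * Complex.I).im = Real.cos x := by
      simp only [Complex.add_im, Complex.one_im, Complex.mul_im, Complex.I_re,
        Complex.I_im, hwre, hwim]; ring
    have e2 : (1 + w * Complex.I).re = 1 - Real.sin x := by
      simp only [Complex.add_re, Complex.one_re, Complex.mul_re, Complex.I_re,
        Complex.I_im, hwre, hwim]; ring
    have e3 : (1 - w * Complex.I).re = 1 + Real.sin x := by
      simp only [Complex.sub_re, Complex.one_re, Complex.mul_re, Complex.I_re,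
        Complex.I_im, hwre, hwim]; ring
    have e4 : (1 - w * Complex.I).im = -Real.cos x := by
      simp only [Complex.sub_im, Complex.one_im, Complex.mul_im, Complex.I_re,
        Complex.I_im, hwre, hwim]; ring
    rw [e1, e2, e3, e4]
    have hs1 : Real.sin x ≤ 1 := Real.sin_le_one x
    have hs2 : Real.sin x > -1 := by linarith
    rw [div_sub_div_same]
    apply div_pos _ hnsq
    nlinarith
  set u : ℂ := (1 + w * Complex.I)/(1 - w * Complex.I) with hu
  have hslit : u ∈ Complex.slitPlane := Complex.mem_slitPlane_iff.mpr (Or.inr huim.ne')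
  have harctan_cont : ContinuousAt Complex.arctan w := by
    have hcont : ContinuousAt
        (fun z : ℂ => -Complex.I/2 * Complex.log ((1 + z*Complex.I)/(1 - z*Complex.I))) w := by
      apply ContinuousAt.mul continuousAt_const
      exact ContinuousAt.clog (ContinuousAt.div (by fun_prop) (by fun_prop) hdne) hslit
    exact hcont
  have hcw : Tendsto (fun r : ℝ => Complex.arctan ((r:ℂ) * w)) (𝓝[<] (1:ℝ))
      (𝓝 (Complex.arctan w)) := by
    have h1 : Tendsto (fun r : ℝ => (r:ℂ) * w) (𝓝[<] (1:ℝ)) (𝓝 w) := by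
      have hco : Continuous (fun r : ℝ => (r:ℂ) * w) :=
        Complex.continuous_ofReal.mul continuous_const
      simpa using (hco.tendsto 1).mono_left nhdsWithin_le_nhds
    exact harctan_cont.tendsto.comp h1
  have heq : ((fun z : ℂ => ∑' n, f n * z ^ n) ∘ Complex.ofReal)
      =ᶠ[𝓝[<] (1:ℝ)] fun r : ℝ => Complex.arctan ((r:ℂ)*w) := by
    filter_upwards [Ioo_mem_nhdsLT_of_mem (show (1:ℝ) ∈ Set.Ioc 0 1 by norm_num)] with r hr
    exact htsum r hr
  have hLval : L = Complex.arctan w := tendsto_nhds_unique (hAbel.congr' heq) hcw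
  -- conjugation identity
  have hargu : u.arg ≠ Real.pi := fun hp => huim.ne' (Complex.arg_eq_pi_iff.mp hp).2
  have hune : u ≠ 0 := fun h => huim.ne' (by rw [h]; rfl)
  have harguinv : (u⁻¹).arg ≠ Real.pi := by
    intro hp
    have := (Complex.arg_eq_pi_iff.mp hp).2
    rw [Complex.inv_im] at this
    have h2 : Complex.normSq u ≠ 0 := ne_of_gt (Complex.normSq_pos.mpr hune)
    have : u.im = 0 := by
      field_simp at this
      simpa using this
    exact huim.ne' this
  have hconjw : Complex.exp (-Complex.I * x) = (starRingEnd ℂ) w := by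
    rw [hw, ← Complex.exp_conj]
    congr 1
    simp [Complex.conj_ofReal]
  have hconj_arctan : Complex.arctan ((starRingEnd ℂ) w) = (starRingEnd ℂ) (Complex.arctan w) := by
    unfold Complex.arctan
    have e1 : 1 + (starRingEnd ℂ) w * Complex.I = (starRingEnd ℂ) (1 - w * Complex.I) := by
      rw [map_sub, map_one, map_mul, Complex.conj_I]; ring
    have e2 : 1 - (starRingEnd ℂ) w * Complex.I = (starRingEnd ℂ) (1 + w * Complex.I) := by
      rw [map_add, map_one, map_mul, Complex.conj_I]; ring
    rw [e1, e2, ← map_div₀]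
    rw [show (1 - w*Complex.I)/(1 + w*Complex.I) = u⁻¹ by rw [hu, inv_div]]
    rw [Complex.log_conj _ harguinv, Complex.log_inv _ hargu]
    simp only [map_neg, map_mul, map_div₀, Complex.conj_I, map_ofNat]
    ring
  refine ⟨L.im, ?_, ?_⟩
  · apply ((Complex.continuous_im.tendsto L).comp hL).congr
    intro N
    exact (hsum_im N).symm
  · rw [hconjw, hconj_arctan, ← hLval]
    have hsc := Complex.sub_conj L
    have hIs : Complex.I ^ 2 = -1 := Complex.I_sq
    push_cast at hsc
    linear_combination (Complex.I/2) * hsc + (L.im:ℂ) * hIs
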